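/- Let (Ω, d) be a compact metric space and σ : Ω → Ω a homeomorphism that is a uniform limit of minimal homeomorphisms, i.e., there exist minimal homeomorphisms f_i with sup_{x} d(σ(x), f_i(x)) → 0. Then σ is chain transitive. -/

import Mathlib

/-- A nonempty closed invariant set which is minimal among such sets. -/
def IsMinimalSet {X : Type*} [TopologicalSpace X] (σ : X ≃ₜ X) (Y : Set X) : Prop :=
  Y.Nonempty ∧ IsClosed Y ∧ σ '' Y = Y ∧
    ∀ Z : Set X, Z ⊆ Y → Z.Nonempty → IsClosed Z → σ '' Z = Z → Z = Y

/-- An `ε`-chain from `x` to `y`: a finite sequence `x = c 0, c 1, ..., c n = y`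
(of length `n ≥ 1`) with `dist (σ (c i)) (c (i+1)) < ε` for all `i < n`. -/
def EpsChain {X : Type*} [MetricSpace X] (σ : X ≃ₜ X) (ε : ℝ) (x y : X) : Prop :=
  ∃ n : ℕ, 1 ≤ n ∧ ∃ c : ℕ → X, c 0 = x ∧ c n = y ∧
    ∀ i < n, dist (σ (c i)) (c (i + 1)) < ε

/-- `σ` is chain transitive if for any two points and any `ε > 0` there is an
`ε`-chain from one to the other. -/
def ChainTransitive {X : Type*} [MetricSpace X] (σ : X ≃ₜ X) : Prop :=
  ∀ x y : X, ∀ ε : ℝ, 0 < ε → EpsChain σ ε x y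

/-- `σ` is aperiodic: no periodic points. -/
def Aperiodic {X : Type*} [TopologicalSpace X] (σ : X ≃ₜ X) : Prop :=
  ∀ x : X, ∀ n : ℤ, n ≠ 0 → (σ.toEquiv ^ n) x ≠ x


lemma forward_dense {Ω : Type*} [MetricSpace Ω] [CompactSpace Ω] (f : Ω ≃ₜ Ω)
    (hmin : ∀ x : Ω, Dense {y : Ω | ∃ n : ℤ, (f.toEquiv ^ n) x = y}) (x : Ω) :
    Dense {y : Ω | ∃ n : ℕ, (⇑f)^[n + 1] x = y} := by
  set S : Set Ω := {y : Ω | ∃ n : ℕ, (⇑f)^[n + 1] x = y} with hS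
  set C : Set Ω := closure S with hC
  have hSne : S.Nonempty := ⟨f x, 0, by simp⟩
  have hfS : f '' S ⊆ S := by
    rintro _ ⟨_, ⟨n, rfl⟩, rfl⟩
    exact ⟨n + 1, by rw [Function.iterate_succ_apply']⟩
  have hfC : f '' C ⊆ C :=
    (image_closure_subset_closure_image f.continuous).trans (closure_mono hfS)
  have hCcl : IsClosed C := isClosed_closure
  have hCcp : IsCompact C := hCcl.isCompact
  set Z : ℕ → Set Ω := fun n => (⇑f)^[n] '' C with hZ
  have hZ0 : Z 0 = C := by simp [hZ]
  have hZsucc : ∀ n, Z (n + 1) = f '' Z n := by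
    intro n
    simp only [hZ, Function.iterate_succ', Set.image_comp]
  have hZsucc' : ∀ n, Z (n + 1) = (⇑f)^[n] '' (f '' C) := by
    intro n
    simp only [hZ, Function.iterate_succ, Set.image_comp]
  have hZmono : ∀ n, Z (n + 1) ⊆ Z n := by
    intro n
    rw [hZsucc']
    exact Set.image_mono hfC
  have hZcp : ∀ n, IsCompact (Z n) := fun n =>
    hCcp.image ((f.continuous.iterate n))
  have hZcl : ∀ n, IsClosed (Z n) := fun n => (hZcp n).isClosed
  have hZne : ∀ n, (Z n).Nonempty := fun n =>
    (hSne.mono subset_closure).image _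
  have hKne : (⋂ n, Z n).Nonempty := by
    apply IsCompact.nonempty_iInter_of_sequence_nonempty_isCompact_isClosed Z hZmono hZne
      (hZ0 ▸ hCcp) hZcl
  set K : Set Ω := ⋂ n, Z n with hK
  have hKcl : IsClosed K := isClosed_iInter hZcl
  have hKC : K ⊆ C := hZ0 ▸ Set.iInter_subset Z 0
  have hfK : ∀ z ∈ K, f z ∈ K := by
    intro z hz
    rw [hK, Set.mem_iInter]
    intro n
    cases n with
    | zero => exact hZ0 ▸ hfC ⟨z, hKC hz, rfl⟩
    | succ m =>
      exact (hZsucc m) ▸ ⟨z, Set.mem_iInter.mp hz m, rfl⟩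
  have hf'K : ∀ z ∈ K, f.symm z ∈ K := by
    intro z hz
    rw [hK, Set.mem_iInter]
    intro n
    have hzn : z ∈ Z (n + 1) := Set.mem_iInter.mp hz (n + 1)
    rw [hZsucc n] at hzn
    obtain ⟨w, hw, rfl⟩ := hzn
    simpa using hw
  obtain ⟨z, hz⟩ := hKne
  have horb : ∀ m : ℤ, ∀ w ∈ K, (f.toEquiv ^ m) w ∈ K := by
    intro m
    induction m using Int.induction_on with
    | zero => intro w hw; simpa using hw
    | succ k ih =>
      intro w hw
      rw [zpow_add_one, Equiv.Perm.mul_apply]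
      exact ih _ (hfK w hw)
    | pred k ih =>
      intro w hw
      rw [zpow_sub_one, Equiv.Perm.mul_apply]
      have : (f.toEquiv⁻¹) w = f.symm w := rfl
      rw [this]
      exact ih _ (hf'K w hw)
  have hdense := hmin z
  have hsub : {y : Ω | ∃ n : ℤ, (f.toEquiv ^ n) z = y} ⊆ K := by
    rintro _ ⟨m, rfl⟩
    exact horb m z hz
  have hKuniv : K = Set.univ := by
    apply Set.eq_univ_of_univ_subset
    rw [← hdense.closure_eq]
    exact closure_minimal hsub hKcl
  have hCuniv : C = Set.univ := Set.eq_univ_of_univ_subset (hKuniv ▸ hKC)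
  rw [dense_iff_closure_eq]
  exact hCuniv

private theorem stmt10_aux {Ω : Type*} [MetricSpace Ω] [CompactSpace Ω]
    (σ : Ω ≃ₜ Ω) (f : ℕ → (Ω ≃ₜ Ω))
    (hmin : ∀ i : ℕ, ∀ x : Ω, Dense {y : Ω | ∃ n : ℤ, ((f i).toEquiv ^ n) x = y})
    (hconv : ∀ ε : ℝ, 0 < ε → ∃ N : ℕ, ∀ i ≥ N, ∀ x : Ω, dist (σ x) ((f i) x) < ε) :
    ∀ x y : Ω, ∀ ε : ℝ, 0 < ε → ∃ n : ℕ, 1 ≤ n ∧ ∃ c : ℕ → Ω, c 0 = x ∧ c n = y ∧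
      ∀ i < n, dist (σ (c i)) (c (i + 1)) < ε := by
  intro x y ε hε
  obtain ⟨N, hN⟩ := hconv (ε / 2) (by positivity)
  have hd := forward_dense (f N) (hmin N) x
  have hy : y ∈ closure {w : Ω | ∃ n : ℕ, (⇑(f N))^[n + 1] x = w} := hd y
  rw [Metric.mem_closure_iff] at hy
  obtain ⟨b, ⟨n, hb⟩, hby⟩ := hy (ε / 2) (by positivity)
  refine ⟨n + 1, le_add_self, fun k => if k = n + 1 then y else (⇑(f N))^[k] x, ?_, by simp, ?_⟩
  · simp
  · intro i hi
    have hi' : i ≠ n + 1 := by omega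
    simp only [hi', if_neg, if_false]
    have hstep : dist (σ ((⇑(f N))^[i] x)) ((f N) ((⇑(f N))^[i] x)) < ε / 2 :=
      hN N le_rfl _
    by_cases h : i + 1 = n + 1
    · rw [if_pos h]
      have hin : i = n := by omega
      have : (f N) ((⇑(f N))^[i] x) = (⇑(f N))^[n + 1] x := by
        rw [hin]; exact (Function.iterate_succ_apply' _ _ _).symm
      calc dist (σ ((⇑(f N))^[i] x)) y
          ≤ dist (σ ((⇑(f N))^[i] x)) ((f N) ((⇑(f N))^[i] x))
            + dist ((f N) ((⇑(f N))^[i] x)) y := dist_triangle _ _ _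
        _ < ε / 2 + ε / 2 := by
            apply add_lt_add hstep
            rw [this, hb]
            exact dist_comm y b ▸ hby
        _ = ε := by ring
    · rw [if_neg h]
      have : (⇑(f N))^[i + 1] x = (f N) ((⇑(f N))^[i] x) := Function.iterate_succ_apply' _ _ _
      rw [this]
      calc dist (σ ((⇑(f N))^[i] x)) ((f N) ((⇑(f N))^[i] x)) < ε / 2 := hstep
        _ < ε := by linarith


theorem stmt10 {Ω : Type*} [MetricSpace Ω] [CompactSpace Ω]
    (σ : Ω ≃ₜ Ω) (f : ℕ → (Ω ≃ₜ Ω))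
    (hmin : ∀ i : ℕ, ∀ x : Ω, Dense {y : Ω | ∃ n : ℤ, ((f i).toEquiv ^ n) x = y})
    (hconv : ∀ ε : ℝ, 0 < ε → ∃ N : ℕ, ∀ i ≥ N, ∀ x : Ω, dist (σ x) ((f i) x) < ε) :
    ChainTransitive σ := by
  intro x y ε hε
  exact stmt10_aux σ f hmin hconv x y ε hε
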